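/- No single-parameter lifted action over a unary predicate p can explain both the transition (∅, {p(a)}) and the transition ({p(a),p(b)}, {p(b)}), where a ≠ b. -/

import Mathlib

def Explains {O : Type*} [DecidableEq O] {k : ℕ}
    (pre add del : Finset (Fin k)) (σ : Fin k → O)
    (Sb Sa : Finset O) : Prop :=
  pre.image σ ⊆ Sb ∧ Sa = (Sb \ del.image σ) ∪ add.image σ

/-- No single-parameter lifted action over a unary predicate `p` explains both
`(∅, {p(a)})` and `({p(a),p(b)}, {p(b)})` when `a ≠ b`. -/
theorem stmt7 {O : Type*} [DecidableEq O] (a b : O) (hab : a ≠ b)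
    (pre add del : Finset (Fin 1)) (σ₁ σ₂ : Fin 1 → O) :
    ¬ (Explains pre add del σ₁ (∅ : Finset O) {a} ∧
       Explains pre add del σ₂ ({a, b} : Finset O) {b}) := by
  rintro ⟨⟨_, h1⟩, ⟨_, h2⟩⟩
  -- from first: a ∈ add.image σ₁, so add is nonempty, so 0 ∈ add
  have ha : a ∈ (∅ \ del.image σ₁) ∪ add.image σ₁ := by
    rw [← h1]; simp
  have hadd : (0 : Fin 1) ∈ add := by
    simp at ha
    obtain ⟨i, hi, _⟩ := ha
    exact i
  -- then σ₂ 0 ∈ add.image σ₂ ⊆ {b}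
  have hσ2 : σ₂ 0 = b := by
    have : σ₂ 0 ∈ ({b} : Finset O) := by
      rw [h2]
      exact Finset.mem_union_right _ (Finset.mem_image_of_mem σ₂ hadd)
    simpa using this
  -- now a ∈ {a,b}; either deleted (image ⊆ {σ₂ 0} = {b}) or a ∈ {b}
  by_cases hd : a ∈ del.image σ₂
  · obtain ⟨i, _, hi⟩ := Finset.mem_image.mp hd
    rw [Fin.eq_zero i, hσ2] at hi
    exact hab hi.symm
  · have : a ∈ ({b} : Finset O) := by
      rw [h2]
      exact Finset.mem_union_left _ (Finset.mem_sdiff.mpr ⟨by simp, hd⟩)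
    exact hab (by simpa using this)
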